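/- Let Ω: TM → V be a virtual immersion with second fundamental form II. Then the Gauss equation holds: R(X,Y,Z,W) = ⟨II(Y,W), II(X,Z)⟩ − ⟨II(X,W), II(Y,Z)⟩, where R is the Riemann curvature tensor of (M,g) with convention R(X,Y)Z = ∇_Y∇_X Z − ∇_X∇_Y Z + ∇_{[X,Y]}Z. -/
import Mathlib


/-
Algebraic (Koszul-style) model of a Riemannian manifold `(M,g)` equipped with a
virtual immersion `Ω : TM → V`:
* `C` is the ring of smooth functions on `M`,
* `VF` is the `C`-module of vector fields on `M`, with Lie `bracket` and
  derivation action `act : VF → C → C`,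
* `g : VF → VF → C` is the Riemannian metric,
* `V` is the `C`-module of sections of the trivial bundle `M × V`, with the
  (pointwise) inner product `ip : V → V → C`,
* `Ω : VF →ₗ[C] V` is the virtual immersion (a `V`-valued one-form),
* `D : VF → V → V` is the flat connection on `M × V`,
* `tang : V →ₗ[C] VF` is the tangential part: it is characterized by
  `ip v (Ω Z) = g (tang v) Z`, so `Ω (tang v)` is the orthogonal projection of
  `v` onto `Ω(TM)` and `v - Ω (tang v)` is the normal part of `v`.
-/

variable {C : Type*} [CommRing C]
variable {VF : Type*} [AddCommGroup VF] [Module C VF]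
variable {V : Type*} [AddCommGroup V] [Module C V]

/-- The tangential connection `D^T_X Y = (D_X (Ω Y))^T`, viewed as a vector field. -/
def DT (Ω : VF →ₗ[C] V) (D : VF → V → V) (tang : V →ₗ[C] VF) (X Y : VF) : VF :=
  tang (D X (Ω Y))

/-- The second fundamental form `II(X,Y) = (D_X (Ω Y))^⊥`. -/
def II (Ω : VF →ₗ[C] V) (D : VF → V → V) (tang : V →ₗ[C] VF) (X Y : VF) : V :=
  D X (Ω Y) - Ω (tang (D X (Ω Y)))

/-- The shape operator `S_η(X) = -(D_X η)^T`. -/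
def Shape (D : VF → V → V) (tang : V →ₗ[C] VF) (η : V) (X : VF) : VF :=
  - tang (D X η)

/-- The curvature tensor `R(X,Y)Z = ∇_Y ∇_X Z - ∇_X ∇_Y Z + ∇_{[X,Y]} Z`,
where `∇ = D^T` is the Levi-Civita connection of `g` (valid for a virtual
immersion). -/
def Rcurv (Ω : VF →ₗ[C] V) (D : VF → V → V) (tang : V →ₗ[C] VF)
    (bracket : VF → VF → VF) (X Y Z : VF) : VF :=
  DT Ω D tang Y (DT Ω D tang X Z) - DT Ω D tang X (DT Ω D tang Y Z)
    + DT Ω D tang (bracket X Y) Z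

/-- The normal connection `D^⊥_X η = (D_X η)^⊥`. -/
def Dperp (Ω : VF →ₗ[C] V) (D : VF → V → V) (tang : V →ₗ[C] VF) (X : VF) (η : V) : V :=
  D X η - Ω (tang (D X η))

/-- The curvature of the normal connection (same sign convention as `Rcurv`). -/
def Rperp (Ω : VF →ₗ[C] V) (D : VF → V → V) (tang : V →ₗ[C] VF)
    (bracket : VF → VF → VF) (X Y : VF) (η : V) : V :=
  Dperp Ω D tang Y (Dperp Ω D tang X η) - Dperp Ω D tang X (Dperp Ω D tang Y η)
    + Dperp Ω D tang (bracket X Y) η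

/-- The covariant derivative of the second fundamental form,
`(D_X II)(Y,Z) = D_X (II(Y,Z)) - II(∇_X Y, Z) - II(Y, ∇_X Z)`. -/
def DII (Ω : VF →ₗ[C] V) (D : VF → V → V) (tang : V →ₗ[C] VF) (X Y Z : VF) : V :=
  D X (II Ω D tang Y Z) - II Ω D tang (DT Ω D tang X Y) Z
    - II Ω D tang Y (DT Ω D tang X Z)

/-- Gauss' equation
`R(X,Y,Z,W) = ⟨II(Y,W), II(X,Z)⟩ - ⟨II(X,W), II(Y,Z)⟩` for a virtual immersion,
with the convention `R(X,Y)Z = ∇_Y∇_X Z - ∇_X∇_Y Z + ∇_{[X,Y]}Z` and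
`R(X,Y,Z,W) = g (R(X,Y)Z) W`. -/
theorem stmt3
    (act : VF → C → C) (bracket : VF → VF → VF) (g : VF → VF → C) (ip : V → V → C)
    (Ω : VF →ₗ[C] V) (D : VF → V → V) (tang : V →ₗ[C] VF)
    (h_act_add : ∀ X (f f' : C), act X (f + f') = act X f + act X f')
    (h_act_mul : ∀ X (f f' : C), act X (f * f') = f * act X f' + f' * act X f)
    (h_br_skew : ∀ X Y, bracket X Y = - bracket Y X)
    (h_br_leib : ∀ X (f : C) Y, bracket X (f • Y) = act X f • Y + f • bracket X Y)
    (h_g_symm : ∀ X Y, g X Y = g Y X)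
    (h_g_addl : ∀ X X' Y, g (X + X') Y = g X Y + g X' Y)
    (h_g_smull : ∀ (f : C) X Y, g (f • X) Y = f * g X Y)
    (h_g_nondeg : ∀ X, (∀ Y, g X Y = 0) → X = 0)
    (h_ip_symm : ∀ u v, ip u v = ip v u)
    (h_ip_addl : ∀ u u' v, ip (u + u') v = ip u v + ip u' v)
    (h_ip_smull : ∀ (f : C) u v, ip (f • u) v = f * ip u v)
    (hD_addX : ∀ X X' v, D (X + X') v = D X v + D X' v)
    (hD_smulX : ∀ (f : C) X v, D (f • X) v = f • D X v)
    (hD_addv : ∀ X u v, D X (u + v) = D X u + D X v)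
    (hD_leib : ∀ X (f : C) v, D X (f • v) = act X f • v + f • D X v)
    (hD_flat : ∀ X Y v, D X (D Y v) - D Y (D X v) = D (bracket X Y) v)
    (hD_ip : ∀ X u v, act X (ip u v) = ip (D X u) v + ip u (D X v))
    (h_tang : ∀ v Z, ip v (Ω Z) = g (tang v) Z)
    (ha : ∀ X Y, ip (Ω X) (Ω Y) = g X Y)
    (hb : ∀ X Y Z, ip (D X (Ω Y) - D Y (Ω X) - Ω (bracket X Y)) (Ω Z) = 0) :
    ∀ X Y Z W, g (Rcurv Ω D tang bracket X Y Z) W =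
      ip (II Ω D tang Y W) (II Ω D tang X Z) - ip (II Ω D tang X W) (II Ω D tang Y Z) := by

  intro X Y Z W
  -- basic consequences of additivity
  have hact0 : ∀ A, act A (0:C) = 0 := by
    intro A
    have h := h_act_add A 0 0
    rw [add_zero] at h
    exact add_eq_left.mp h.symm
  have hip0l : ∀ v, ip 0 v = 0 := by
    intro v
    have h := h_ip_addl 0 0 v
    rw [add_zero] at h
    exact add_eq_left.mp h.symm
  have hipsubl : ∀ u u' v, ip (u - u') v = ip u v - ip u' v := by
    intro u u' v
    have h := h_ip_addl (u - u') u' v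
    rw [sub_add_cancel] at h
    linear_combination -h
  have hgsubl : ∀ A B Ww, g (A - B) Ww = g A Ww - g B Ww := by
    intro A B Ww
    have h := h_g_addl (A - B) B Ww
    rw [sub_add_cancel] at h
    linear_combination -h
  have hDsub : ∀ A u v, D A (u - v) = D A u - D A v := by
    intro A u v
    have h := hD_addv A (u - v) v
    rw [sub_add_cancel] at h
    exact eq_sub_of_add_eq h.symm
  -- normality of II
  have hperp : ∀ A B Ww, ip (II Ω D tang A B) (Ω Ww) = 0 := by
    intro A B Ww
    simp only [II]
    rw [hipsubl, h_tang, ha, sub_self]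
  have hΩDT : ∀ A B, Ω (DT Ω D tang A B) = D A (Ω B) - II Ω D tang A B := by
    intro A B
    simp [DT, II]
  -- key computation
  have key : ∀ A B, g (DT Ω D tang A (DT Ω D tang B Z)) W
      = ip (D A (D B (Ω Z))) (Ω W) + ip (II Ω D tang B Z) (II Ω D tang A W) := by
    intro A B
    have e1 : g (DT Ω D tang A (DT Ω D tang B Z)) W
        = ip (D A (Ω (DT Ω D tang B Z))) (Ω W) := by
      simp only [DT]
      exact (h_tang _ _).symm
    rw [e1, hΩDT, hDsub, hipsubl]
    have h2 := hD_ip A (II Ω D tang B Z) (Ω W)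
    rw [hperp, hact0] at h2
    have h3 : ip (II Ω D tang B Z) (D A (Ω W))
        = ip (II Ω D tang B Z) (II Ω D tang A W) := by
      have hDW : D A (Ω W) = Ω (DT Ω D tang A W) + II Ω D tang A W := by
        rw [hΩDT]; abel
      rw [hDW, h_ip_symm, h_ip_addl, h_ip_symm (Ω (DT Ω D tang A W)), hperp,
        h_ip_symm (II Ω D tang A W)]
      ring
    rw [h3] at h2
    linear_combination h2
  have keybr : g (DT Ω D tang (bracket X Y) Z) W
      = ip (D (bracket X Y) (Ω Z)) (Ω W) := by
    simp only [DT]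
    exact (h_tang _ _).symm
  -- flatness
  have hflat : D Y (D X (Ω Z)) - D X (D Y (Ω Z)) = - D (bracket X Y) (Ω Z) := by
    have h := hD_flat Y X (Ω Z)
    rw [h_br_skew Y X, ← neg_one_smul C (bracket X Y), hD_smulX, neg_one_smul] at h
    exact h
  have hipflat : ip (D Y (D X (Ω Z))) (Ω W) - ip (D X (D Y (Ω Z))) (Ω W)
      = - ip (D (bracket X Y) (Ω Z)) (Ω W) := by
    rw [← hipsubl, hflat]
    have h := hipsubl 0 (D (bracket X Y) (Ω Z)) (Ω W)
    rw [zero_sub, hip0l] at h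
    linear_combination h
  -- assemble
  have hR : g (Rcurv Ω D tang bracket X Y Z) W
      = g (DT Ω D tang Y (DT Ω D tang X Z)) W - g (DT Ω D tang X (DT Ω D tang Y Z)) W
        + g (DT Ω D tang (bracket X Y) Z) W := by
    simp only [Rcurv]
    rw [h_g_addl, hgsubl]
  rw [hR, key Y X, key X Y, keybr,
    h_ip_symm (II Ω D tang Y W), h_ip_symm (II Ω D tang X W)]
  linear_combination hipflat
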